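/- Let n ≥ 2 and D be integers with D² < 4n, let z = D/2 + i·√(n − D²/4), and define the reduction map r : ℤ×ℤ → ℤ×ℤ by r(a,b) = (b + D·⌊a/n⌋, −⌊a/n⌋), with value map v(a,b) = a + bz ∈ ℂ. Then for every (a,b) ∈ ℤ×ℤ there exists k ∈ ℕ such that |v(r^k(a,b))| ≤ √n + 1, i.e., finitely many reductions bring any lattice point into the closed ball of radius √n + 1. -/

import Mathlib

theorem stmt_8 (n D : ℤ) (hn : 2 ≤ n) (hD : D ^ 2 < 4 * n)
    (z : ℂ) (hz : z = (D : ℂ) / 2 + Complex.I * (Real.sqrt ((n : ℝ) - (D : ℝ) ^ 2 / 4) : ℝ))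
    (r : ℤ × ℤ → ℤ × ℤ)
    (hr : ∀ a b : ℤ, r (a, b) = (b + D * Int.fdiv a n, -(Int.fdiv a n)))
    (v : ℤ × ℤ → ℂ) (hv : ∀ a b : ℤ, v (a, b) = (a : ℂ) + (b : ℂ) * z) :
    ∀ p : ℤ × ℤ, ∃ k : ℕ, ‖v (r^[k] p)‖ ≤ Real.sqrt (n : ℝ) + 1 := by
  set y : ℝ := Real.sqrt ((n : ℝ) - (D : ℝ) ^ 2 / 4) with hy
  have hDn : ((D : ℝ)) ^ 2 < 4 * (n : ℝ) := by exact_mod_cast hD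
  have hny : (0:ℝ) ≤ (n : ℝ) - (D : ℝ) ^ 2 / 4 := by linarith
  have hy2 : y ^ 2 = (n : ℝ) - (D : ℝ) ^ 2 / 4 := Real.sq_sqrt hny
  have hn2 : (2:ℝ) ≤ (n:ℝ) := by exact_mod_cast hn
  have hsn : Real.sqrt (n:ℝ) ^ 2 = (n:ℝ) := Real.sq_sqrt (by linarith)
  have hsn1 : 1 < Real.sqrt (n:ℝ) := by
    nlinarith [Real.sqrt_nonneg (n:ℝ)]
  -- z² = D z - n
  have hzsq : z ^ 2 = (D:ℂ) * z - (n:ℂ) := by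
    have h1 : ((y:ℝ):ℂ) ^ 2 = (n:ℂ) - (D:ℂ) ^ 2 / 4 := by
      rw [← Complex.ofReal_pow, hy2]; push_cast; ring
    rw [hz]
    linear_combination Complex.I ^ 2 * h1 + ((n:ℂ) - (D:ℂ)^2/4) * Complex.I_sq
  -- |z| = √n
  have hnz : Complex.normSq z = (n:ℝ) := by
    rw [hz]
    simp [Complex.normSq_apply]
    nlinarith [hy2]
  have habsz : ‖z‖ = Real.sqrt (n:ℝ) := by
    rw [Complex.norm_def, hnz]
  -- integrality of normSq
  have hnorm : ∀ p : ℤ × ℤ, Complex.normSq (v p) =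
      ((p.1 ^ 2 + p.1 * p.2 * D + p.2 ^ 2 * n : ℤ) : ℝ) := by
    rintro ⟨a, b⟩
    rw [hv, hz]
    simp only [Complex.normSq_apply, Complex.add_re, Complex.add_im, Complex.mul_re,
      Complex.mul_im, Complex.I_re, Complex.I_im, Complex.ofReal_re, Complex.ofReal_im,
      Complex.div_ofNat_re, Complex.div_ofNat_im, Complex.intCast_re, Complex.intCast_im]
    push_cast
    nlinarith [hy2]
  -- the key algebraic identity: z * v (r p) = v p - (p.1 fmod n)
  have hstep : ∀ p : ℤ × ℤ, z * v (r p) = v p - ((Int.fmod p.1 n : ℤ) : ℂ) := by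
    rintro ⟨a, b⟩
    rw [hr, hv, hv, Int.fmod_def]
    push_cast
    linear_combination (-(Int.fdiv a n : ℂ)) * hzsq
  -- the contraction estimate
  have hcontr : ∀ p : ℤ × ℤ, ‖v (r p)‖ * Real.sqrt (n:ℝ) ≤
      ‖v p‖ + ((n:ℝ) - 1) := by
    intro p
    have h1 : ‖z * v (r p)‖ ≤ ‖v p‖ + ((n:ℝ) - 1) := by
      rw [hstep p]
      refine le_trans (norm_sub_le _ _) ?_
      have hd0 : (0:ℤ) ≤ Int.fmod p.1 n := Int.fmod_nonneg_of_pos _ (by omega)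
      have hd1 : Int.fmod p.1 n < n := Int.fmod_lt_of_pos _ (by omega)
      have : ‖((Int.fmod p.1 n : ℤ) : ℂ)‖ = ((Int.fmod p.1 n : ℤ) : ℝ) := by
        rw [Complex.norm_intCast]
        exact abs_of_nonneg (by exact_mod_cast hd0)
      rw [this]
      have : ((Int.fmod p.1 n : ℤ) : ℝ) ≤ (n:ℝ) - 1 := by
        have : Int.fmod p.1 n ≤ n - 1 := by omega
        exact_mod_cast this
      linarith
    rw [norm_mul, habsz, mul_comm] at h1
    exact h1
  -- main induction on the integer normSq
  suffices H : ∀ m : ℕ, ∀ p : ℤ × ℤ, Complex.normSq (v p) ≤ (m : ℝ) →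
      ∃ k : ℕ, ‖v (r^[k] p)‖ ≤ Real.sqrt (n:ℝ) + 1 by
    intro p
    refine H (p.1 ^ 2 + p.1 * p.2 * D + p.2 ^ 2 * n).toNat p ?_
    rw [hnorm p]
    have h0 : (0:ℝ) ≤ Complex.normSq (v p) := Complex.normSq_nonneg _
    rw [hnorm p] at h0
    exact_mod_cast Int.self_le_toNat _
  intro m
  induction m with
  | zero =>
      intro p hp
      refine ⟨0, ?_⟩
      simp only [Function.iterate_zero, id_eq]
      have h0 : Complex.normSq (v p) = 0 :=
        le_antisymm (by simpa using hp) (Complex.normSq_nonneg _)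
      have hv0 : v p = 0 := Complex.normSq_eq_zero.mp h0
      rw [hv0]
      simp only [norm_zero]
      positivity
  | succ m ih =>
      intro p hp
      by_cases hcase : ‖v p‖ ≤ Real.sqrt (n:ℝ) + 1
      · exact ⟨0, by simpa using hcase⟩
      · push_neg at hcase
        have hc := hcontr p
        -- strict decrease of abs
        have hlt : ‖v (r p)‖ < ‖v p‖ := by
          have hsn0 : (0:ℝ) < Real.sqrt (n:ℝ) := by linarith
          nlinarith [norm_nonneg (v (r p))]
        -- strict decrease of integer normSq
        have hltsq : Complex.normSq (v (r p)) < Complex.normSq (v p) := by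
          rw [← Complex.sq_norm, ← Complex.sq_norm]
          have h0 : (0:ℝ) ≤ ‖v (r p)‖ := norm_nonneg _
          nlinarith
        have hintlt : (r p).1 ^ 2 + (r p).1 * (r p).2 * D + (r p).2 ^ 2 * n
            < p.1 ^ 2 + p.1 * p.2 * D + p.2 ^ 2 * n := by
          have := hltsq
          rw [hnorm, hnorm] at this
          exact_mod_cast this
        have hple : p.1 ^ 2 + p.1 * p.2 * D + p.2 ^ 2 * n ≤ (m:ℤ) + 1 := by
          have := hp
          rw [hnorm] at this
          exact_mod_cast this
        have hnext : Complex.normSq (v (r p)) ≤ (m : ℝ) := by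
          rw [hnorm]
          have : (r p).1 ^ 2 + (r p).1 * (r p).2 * D + (r p).2 ^ 2 * n ≤ (m:ℤ) := by omega
          exact_mod_cast this
        obtain ⟨k, hk⟩ := ih (r p) hnext
        exact ⟨k + 1, by rwa [Function.iterate_succ_apply]⟩
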